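/- arXiv:2407.08478 — 4 statements merged into one kernel-verified Lean document; each statement's English description precedes it below -/
import Mathlib

section
/- Under the same assumptions as the previous statement (w a probability vector on [1,N] solving the stationarity equations of Z), for every i ∈ [2, N] one has (λ_i + μ_i + κ) w_i = λ_{i-1} w_{i-1} + μ_{i+1} w_{i+1}, with conventions λ_N = 0 and w_{N+1} = 0. -/
open Finset

theorem stmt3 (N : ℕ) (hN : 0 < N) (lam mu : ℕ → ℝ) (kappa : ℝ)
    (hlam : ∀ i, 1 ≤ i → i ≤ N - 1 → 0 < lam i)
    (hmu : ∀ i, 1 ≤ i → i ≤ N → 0 ≤ mu i)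
    (hkappa : 0 < kappa)
    (hlamN : lam N = 0)
    (w : ℕ → ℝ)
    (hw0 : w 0 = 0) (hwN1 : w (N + 1) = 0)
    (hwnn : ∀ i, 1 ≤ i → i ≤ N → 0 ≤ w i)
    (hwsum : ∑ i ∈ Finset.Icc 1 N, w i = 1)
    (hstat : ∀ i, 1 ≤ i → i ≤ N →
      (((i : ℝ) - 1) * (mu i + kappa) + (i : ℝ) * lam i) * w i
        = ((i : ℝ) - 1) * lam (i - 1) * w (i - 1) + (i : ℝ) * mu (i + 1) * w (i + 1)
          + kappa * ∑ j ∈ Finset.Icc (i + 1) N, w j) :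
    ∀ i, 2 ≤ i → i ≤ N →
      (lam i + mu i + kappa) * w i = lam (i - 1) * w (i - 1) + mu (i + 1) * w (i + 1) := by
  -- Flux relation (4.3), proved by downward induction from i = N
  have flux : ∀ d i, N = i + d → 1 ≤ i →
      lam i * w i = mu (i + 1) * w (i + 1) + kappa * ∑ j ∈ Finset.Icc (i + 1) N, w j := by
    intro d
    induction d with
    | zero =>
      intro i hNi _
      have hiN : i = N := by omega
      rw [hiN]
      simp [hlamN, hwN1, Finset.Icc_eq_empty_of_lt (Nat.lt_succ_self N)]
    | succ d ih =>
      intro i hNi hi1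
      have hi1N : i + 1 ≤ N := by omega
      have hIH := ih (i + 1) (by omega) (by omega)
      have hstat' := hstat (i + 1) (by omega) hi1N
      have hidx : i + 1 - 1 = i := by omega
      rw [hidx] at hstat'
      push_cast at hstat'
      have hsum : ∑ j ∈ Finset.Icc (i + 1) N, w j
          = w (i + 1) + ∑ j ∈ Finset.Icc (i + 1 + 1) N, w j := by
        rw [show Finset.Icc (i + 1) N = insert (i + 1) (Finset.Icc (i + 1 + 1) N) by
          rw [Finset.Icc_eq_cons_Ico hi1N] at *
          ext x
          simp [Finset.mem_Icc, Finset.mem_cons, Finset.mem_Ico]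
          omega]
        rw [Finset.sum_insert (by simp)]
      rw [hsum]
      have hi0 : (i : ℝ) ≠ 0 := Nat.cast_ne_zero.mpr (by omega)
      apply mul_left_cancel₀ hi0
      linear_combination (-(1:ℝ)) * hstat' + ((i : ℝ) + 1) * hIH
  intro i h2 hiN
  have hflux := flux (N - i) i (by omega) (by omega)
  have hstati := hstat i (by omega) hiN
  have hi1 : ((i : ℝ) - 1) ≠ 0 := by
    have : (2 : ℝ) ≤ (i : ℝ) := by exact_mod_cast h2
    linarith
  apply mul_left_cancel₀ hi1
  linear_combination hstati - hflux
end

section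
/- Let N be a positive integer, 1 ≤ n ≤ N−1, and let w = (w_i)_{i=1}^{N} be the probability vector solving the stationarity equations of the catastrophe process Z (as above), with ∑_{j=n}^{N} w_j > 0. Define w^{(n)}_i := w_i / ∑_{j=n}^{N} w_j for i ∈ [n, N]. Then w^{(n)} is a stationary distribution of the restricted process Z^{(n)} on [n, N], i.e. it satisfies λ_n w^{(n)}_n = μ_{n+1} w^{(n)}_{n+1} + κ ∑_{j=n+1}^{N} w^{(n)}_j and (λ_i + μ_i + κ) w^{(n)}_i = λ_{i-1} w^{(n)}_{i-1} + μ_{i+1} w^{(n)}_{i+1} for all i ∈ [n+1, N]. -/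
open Finset

theorem stmt4 (N : ℕ) (hN : 0 < N) (lam mu : ℕ → ℝ) (kappa : ℝ)
    (hlam : ∀ i, 1 ≤ i → i ≤ N - 1 → 0 < lam i)
    (hmu : ∀ i, 1 ≤ i → i ≤ N → 0 ≤ mu i)
    (hkappa : 0 < kappa)
    (hlamN : lam N = 0)
    (w : ℕ → ℝ)
    (hw0 : w 0 = 0) (hwN1 : w (N + 1) = 0)
    (hwnn : ∀ i, 1 ≤ i → i ≤ N → 0 ≤ w i)
    (hwsum : ∑ i ∈ Finset.Icc 1 N, w i = 1)
    (hstat : ∀ i, 1 ≤ i → i ≤ N →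
      (((i : ℝ) - 1) * (mu i + kappa) + (i : ℝ) * lam i) * w i
        = ((i : ℝ) - 1) * lam (i - 1) * w (i - 1) + (i : ℝ) * mu (i + 1) * w (i + 1)
          + kappa * ∑ j ∈ Finset.Icc (i + 1) N, w j)
    (n : ℕ) (hn1 : 1 ≤ n) (hnN : n ≤ N - 1)
    (hS : 0 < ∑ j ∈ Finset.Icc n N, w j)
    (w' : ℕ → ℝ)
    (hw' : ∀ i, w' i = w i / ∑ j ∈ Finset.Icc n N, w j) :
    lam n * w' n = mu (n + 1) * w' (n + 1) + kappa * ∑ j ∈ Finset.Icc (n + 1) N, w' j ∧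
    ∀ i, n + 1 ≤ i → i ≤ N →
      (lam i + mu i + kappa) * w' i = lam (i - 1) * w' (i - 1) + mu (i + 1) * w' (i + 1) := by
  -- splitting of tail sums
  have hTsplit : ∀ i, i ≤ N →
      ∑ j ∈ Finset.Icc i N, w j = w i + ∑ j ∈ Finset.Icc (i + 1) N, w j := by
    intro i hiN
    have hset : Finset.Icc i N = insert i (Finset.Icc (i + 1) N) := by
      ext x
      simp only [Finset.mem_Icc, Finset.mem_insert]
      omega
    rw [hset, Finset.sum_insert (by simp)]
  -- the key identity for w
  have hA : ∀ i, 1 ≤ i → i ≤ N →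
      lam i * w i = mu (i + 1) * w (i + 1) + kappa * ∑ j ∈ Finset.Icc (i + 1) N, w j := by
    intro i hi1
    induction i, hi1 using Nat.le_induction with
    | base =>
      intro h1N
      have h := hstat 1 le_rfl h1N
      norm_num at h
      linarith [h]
    | succ i hi IH =>
      intro hiN
      have h := hstat (i + 1) (by omega) hiN
      have hI := IH (by omega)
      have hT := hTsplit (i + 1) hiN
      simp only [Nat.add_sub_cancel, show (i + 1) + 1 = i + 2 from rfl] at h
      push_cast at h
      have hc : ((i : ℝ) + 1) ≠ 0 := by positivity
      have key : ((i : ℝ) + 1) * (lam (i + 1) * w (i + 1))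
          = ((i : ℝ) + 1) * (mu (i + 2) * w (i + 2)
              + kappa * ∑ j ∈ Finset.Icc (i + 2) N, w j) := by
        linear_combination h + (i : ℝ) * hI + (i : ℝ) * kappa * hT
      exact mul_left_cancel₀ hc key
  have hnN' : n ≤ N := by omega
  have hSne : (∑ j ∈ Finset.Icc n N, w j) ≠ 0 := ne_of_gt hS
  constructor
  · have h1 := hA n hn1 hnN'
    simp only [hw', ← Finset.sum_div]
    field_simp
    linear_combination h1
  · intro i hi1 hi2
    obtain ⟨k, rfl⟩ : ∃ k, i = k + 1 := ⟨i - 1, by omega⟩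
    have hAk := hA k (by omega) (by omega)
    have hAk1 := hA (k + 1) (by omega) hi2
    have hT := hTsplit (k + 1) hi2
    have hB : (lam (k + 1) + mu (k + 1) + kappa) * w (k + 1)
        = lam k * w k + mu (k + 2) * w (k + 2) := by
      linear_combination hAk1 - hAk - kappa * hT
    simp only [hw', Nat.add_sub_cancel, show (k + 1) + 1 = k + 2 from rfl]
    field_simp
    linear_combination hB
end

section
/- Fix σ > 0, θ > 0, ν_1 ∈ (0,1). Let (β_i)_{i≥0} satisfy β_0 = 1, lim_{i→∞} β_i = 0, and the recursion (i − 1 + σ + θ) β_i = σ β_{i+1} + (i − 1 + θν_1) β_{i-1} for i ≥ 1, with β_1 > β_2 > 0. Define α_i := [(β_{i+1} − β_{i+2})/(β_1 − β_2)] · σ^i / ∏_{j=1}^{i}(j + θν_1) for i ≥ 0. Then α_0 = 1 and (α_i) satisfies Fearnhead's recursion (i + 1 + σ + θ) α_i = σ α_{i-1} + (i + 1 + θν_1) α_{i+1} for all i ≥ 1. -/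
set_option maxRecDepth 4000


open Finset Filter

theorem stmt13 (σ θ ν1 : ℝ) (hσ : 0 < σ) (hθ : 0 < θ) (hν : ν1 ∈ Set.Ioo (0:ℝ) 1)
    (β α : ℕ → ℝ)
    (hβ0 : β 0 = 1) (hβlim : Tendsto β atTop (nhds 0))
    (hβrec : ∀ i : ℕ, 1 ≤ i →
      ((i : ℝ) - 1 + σ + θ) * β i = σ * β (i + 1) + ((i : ℝ) - 1 + θ * ν1) * β (i - 1))
    (hβ12 : β 2 < β 1) (hβ2 : 0 < β 2)
    (hα : ∀ i : ℕ,
      α i = (β (i + 1) - β (i + 2)) / (β 1 - β 2) * σ ^ i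
              / ∏ j ∈ Finset.Icc 1 i, ((j : ℝ) + θ * ν1)) :
    α 0 = 1 ∧
    ∀ i : ℕ, 1 ≤ i →
      ((i : ℝ) + 1 + σ + θ) * α i = σ * α (i - 1) + ((i : ℝ) + 1 + θ * ν1) * α (i + 1) := by
  have hd0 : β 1 - β 2 ≠ 0 := by linarith
  have hθν : 0 < θ * ν1 := mul_pos hθ hν.1
  have hP : ∀ i : ℕ, 0 < ∏ j ∈ Finset.Icc 1 i, ((j : ℝ) + θ * ν1) := by
    intro i
    apply Finset.prod_pos
    intro j hj
    have h1 := (Finset.mem_Icc.mp hj).1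
    have h1' : (1 : ℝ) ≤ j := by exact_mod_cast h1
    linarith
  constructor
  · rw [hα 0]
    simp [div_self hd0]
  · intro i hi
    obtain ⟨k, rfl⟩ : ∃ k, i = k + 1 := ⟨i - 1, (Nat.succ_pred_eq_of_pos hi).symm⟩
    -- key relation on differences d_i = β (i+1) - β (i+2)
    have h1 := hβrec (k + 2) (by omega)
    have h2 := hβrec (k + 3) (by omega)
    simp only [Nat.add_sub_cancel, show k + 2 - 1 = k + 1 from rfl, show k + 3 - 1 = k + 2 from rfl] at h1 h2
    push_cast at h1 h2
    have hkey : ((k : ℝ) + 2 + σ + θ) * (β (k + 2) - β (k + 3))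
        = σ * (β (k + 3) - β (k + 4)) + ((k : ℝ) + 1 + θ * ν1) * (β (k + 1) - β (k + 2)) := by
      have e1 : β (k + 1 + 1) = β (k + 2) := by ring_nf
      have e2 : β (k + 2 + 1) = β (k + 3) := by ring_nf
      have e3 : β (k + 3 + 1) = β (k + 4) := by ring_nf
      rw [e1, e2] at h1
      rw [e2, e3] at h2
      linarith
    have hPk := hP k
    set Pk := ∏ j ∈ Finset.Icc 1 k, ((j : ℝ) + θ * ν1) with hPkdef
    have hP1 : ∏ j ∈ Finset.Icc 1 (k + 1), ((j : ℝ) + θ * ν1)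
        = Pk * ((k : ℝ) + 1 + θ * ν1) := by
      rw [Finset.prod_Icc_succ_top (by omega)]
      push_cast; ring
    have hP2 : ∏ j ∈ Finset.Icc 1 (k + 2), ((j : ℝ) + θ * ν1)
        = Pk * ((k : ℝ) + 1 + θ * ν1) * ((k : ℝ) + 2 + θ * ν1) := by
      have : k + 2 = (k + 1) + 1 := rfl
      rw [this, Finset.prod_Icc_succ_top (by omega), hP1]
      push_cast; ring
    have ha1 := hα (k + 1)
    have ha0 := hα k
    have ha2 := hα (k + 2)
    rw [hP1] at ha1
    rw [hP2] at ha2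
    simp only [Nat.add_sub_cancel]
    have hq1 : ((k : ℝ) + 1 + θ * ν1) ≠ 0 := by positivity
    have hq2 : ((k : ℝ) + 2 + θ * ν1) ≠ 0 := by positivity
    have hPk' : Pk ≠ 0 := ne_of_gt hPk
    have hA0 : α k * ((β 1 - β 2) * Pk) = (β (k + 1) - β (k + 2)) * σ ^ k := by
      rw [ha0, ← hPkdef]; field_simp
    have hA1 : α (k + 1) * ((β 1 - β 2) * Pk * ((k : ℝ) + 1 + θ * ν1))
        = (β (k + 2) - β (k + 3)) * σ ^ (k + 1) := by
      rw [ha1]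
      have e1 : (k + 1 + 1 : ℕ) = k + 2 := rfl
      have e2 : (k + 1 + 2 : ℕ) = k + 3 := rfl
      rw [e1, e2]
      field_simp
    have hA2 : α (k + 2) * ((β 1 - β 2) * Pk * ((k : ℝ) + 1 + θ * ν1) * ((k : ℝ) + 2 + θ * ν1))
        = (β (k + 3) - β (k + 4)) * σ ^ (k + 2) := by
      rw [ha2]
      have e1 : (k + 2 + 1 : ℕ) = k + 3 := rfl
      have e2 : (k + 2 + 2 : ℕ) = k + 4 := rfl
      rw [e1, e2]
      field_simp
    have hD : (β 1 - β 2) * Pk * ((k : ℝ) + 1 + θ * ν1) * ((k : ℝ) + 2 + θ * ν1) ≠ 0 := by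
      exact mul_ne_zero (mul_ne_zero (mul_ne_zero hd0 hPk') hq1) hq2
    apply mul_right_cancel₀ hD
    push_cast
    linear_combination (((k : ℝ) + 2 + σ + θ) * ((k : ℝ) + 2 + θ * ν1)) * hA1
      - (σ * ((k : ℝ) + 1 + θ * ν1) * ((k : ℝ) + 2 + θ * ν1)) * hA0
      - (((k : ℝ) + 2 + θ * ν1)) * hA2
      + (σ ^ (k + 1) * ((k : ℝ) + 2 + θ * ν1)) * hkey
end

section
/- Fix σ > 0, θ > 0, ν_1 ∈ (0,1). Let π(y) := C^{-1} e^{-σy} y^{θν_1 − 1} (1−y)^{θν_0 − 1} on (0,1), with ν_0 = 1 − ν_1 and C the normalizing constant, and define β_i := ∫_0^1 y^i π(y) dy for i ≥ 0 (moments of Wright's distribution). Then (β_i) satisfies the recursion (i − 1 + σ + θ) β_i = σ β_{i+1} + (i − 1 + θν_1) β_{i-1} for all i ≥ 1, together with β_0 = 1 and lim_{i→∞} β_i = 0. -/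
open Filter MeasureTheory Set intervalIntegral

lemma betaInt {a b : ℝ} (ha : 0 < a) (hb : 0 < b) :
    IntervalIntegrable (fun y : ℝ => y ^ (a - 1) * (1 - y) ^ (b - 1)) volume 0 1 := by
  have h := Complex.betaIntegral_convergent (u := (a : ℂ)) (v := (b : ℂ))
    (by simpa using ha) (by simpa using hb)
  rw [intervalIntegrable_iff_integrableOn_Ioc_of_le zero_le_one] at h ⊢
  have h2 := h.re
  refine (IntegrableOn.congr_fun h2 ?_ measurableSet_Ioc)
  intro x hx
  have hx0 : (0:ℝ) ≤ x := le_of_lt hx.1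
  have hx1 : (0:ℝ) ≤ 1 - x := by linarith [hx.2]
  simp only
  rw [show ((a:ℂ) - 1) = ((a - 1 : ℝ) : ℂ) by push_cast; ring,
    show ((b:ℂ) - 1) = ((b - 1 : ℝ) : ℂ) by push_cast; ring,
    show (1 - (x:ℂ)) = ((1 - x : ℝ) : ℂ) by push_cast; ring,
    ← Complex.ofReal_cpow hx0, ← Complex.ofReal_cpow hx1, ← Complex.ofReal_mul]
  simp

theorem stmt14 (σ θ ν1 ν0 : ℝ) (hσ : 0 < σ) (hθ : 0 < θ) (hν : ν1 ∈ Set.Ioo (0:ℝ) 1)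
    (hν0 : ν0 = 1 - ν1)
    (C : ℝ)
    (hC : C = ∫ y in (0:ℝ)..1,
      Real.exp (-σ * y) * y ^ (θ * ν1 - 1) * (1 - y) ^ (θ * ν0 - 1))
    (π : ℝ → ℝ)
    (hπ : ∀ y : ℝ, π y = C⁻¹ *
      (Real.exp (-σ * y) * y ^ (θ * ν1 - 1) * (1 - y) ^ (θ * ν0 - 1)))
    (β : ℕ → ℝ)
    (hβ : ∀ i : ℕ, β i = ∫ y in (0:ℝ)..1, y ^ i * π y) :
    β 0 = 1 ∧ Tendsto β atTop (nhds 0) ∧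
    ∀ i : ℕ, 1 ≤ i →
      ((i : ℝ) - 1 + σ + θ) * β i = σ * β (i + 1) + ((i : ℝ) - 1 + θ * ν1) * β (i - 1) := by
  set f : ℝ → ℝ := fun y => Real.exp (-σ * y) * y ^ (θ * ν1 - 1) * (1 - y) ^ (θ * ν0 - 1)
    with hf
  have ha : 0 < θ * ν1 := mul_pos hθ hν.1
  have hb : 0 < θ * ν0 := by
    rw [hν0]; exact mul_pos hθ (by linarith [hν.2])
  -- integrability of f
  have hfint : IntervalIntegrable f volume 0 1 := by
    have h := (betaInt ha hb).continuousOn_mul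
      (g := fun y => Real.exp (-σ * y))
      ((Real.continuous_exp.comp (continuous_const.mul continuous_id)).continuousOn)
    refine h.congr ?_
    intro y _
    simp [hf, mul_assoc]
  -- integrability of y^k * f y
  have hk : ∀ k : ℕ, IntervalIntegrable (fun y => y ^ k * f y) volume 0 1 := by
    intro k
    exact hfint.continuousOn_mul (continuous_pow k).continuousOn
  have hfpos : ∀ y ∈ Set.Ioo (0:ℝ) 1, 0 < f y := by
    intro y hy
    have h1 : 0 < 1 - y := by linarith [hy.2]
    exact mul_pos (mul_pos (Real.exp_pos _) (Real.rpow_pos_of_pos hy.1 _))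
      (Real.rpow_pos_of_pos h1 _)
  have hCpos : 0 < C := by
    rw [hC]
    exact intervalIntegral_pos_of_pos_on hfint hfpos one_pos
  set b : ℕ → ℝ := fun k => ∫ y in (0:ℝ)..1, y ^ k * f y with hbdef
  have hβb : ∀ k : ℕ, β k = C⁻¹ * b k := by
    intro k
    rw [hβ k, hbdef]
    rw [← intervalIntegral.integral_const_mul]
    apply intervalIntegral.integral_congr
    intro y _
    show y ^ k * π y = C⁻¹ * (y ^ k * f y)
    rw [hπ y]; ring
  have hb0 : b 0 = C := by
    rw [hbdef, hC]
    apply intervalIntegral.integral_congr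
    intro y _
    simp [hf]
  constructor
  · rw [hβb 0, hb0, inv_mul_cancel₀ (ne_of_gt hCpos)]
  constructor
  · -- limit
    have hbk : Tendsto b atTop (nhds 0) := by
      have heq : ∀ k : ℕ, b k = ∫ y in Set.Ioc (0:ℝ) 1, y ^ k * f y := by
        intro k
        rw [hbdef]
        exact intervalIntegral.integral_of_le zero_le_one
      have h0 : (0:ℝ) = ∫ y in Set.Ioc (0:ℝ) 1, (0:ℝ) := by simp
      rw [show (nhds (0:ℝ)) = nhds (∫ y in Set.Ioc (0:ℝ) 1, (0:ℝ)) by rw [← h0]]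
      have := MeasureTheory.tendsto_integral_of_dominated_convergence
        (μ := volume.restrict (Set.Ioc (0:ℝ) 1))
        (F := fun (k : ℕ) (y : ℝ) => y ^ k * f y) (f := fun _ => (0:ℝ))
        (bound := fun y => |f y|)
        (fun k => ((hk k).1).aestronglyMeasurable)
        (hfint.1.norm)
        ?_ ?_
      · exact (funext heq : b = _) ▸ this
      · intro k
        rw [ae_restrict_iff' measurableSet_Ioc]
        filter_upwards with y hy
        have hy0 : 0 ≤ y := le_of_lt hy.1
        have hy1 : y ≤ 1 := hy.2
        have : |y ^ k| ≤ 1 := by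
          rw [abs_pow, abs_of_nonneg hy0]
          exact pow_le_one₀ hy0 hy1
        calc ‖y ^ k * f y‖ = |y ^ k| * |f y| := abs_mul _ _
          _ ≤ 1 * |f y| := by gcongr
          _ = |f y| := one_mul _
      · have hne : ∀ᵐ y ∂(volume.restrict (Set.Ioc (0:ℝ) 1)), y ≠ 1 := by
          refine ae_restrict_of_ae ?_
          have : volume ({(1:ℝ)} : Set ℝ) = 0 := measure_singleton 1
          rw [ae_iff]
          simpa using this
        rw [ae_restrict_iff' measurableSet_Ioc] at hne ⊢
        filter_upwards [hne] with y hy1 hy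
        have hy0 : 0 ≤ y := le_of_lt hy.1
        have hylt : y < 1 := lt_of_le_of_ne hy.2 (hy1 hy)
        have h1 : Tendsto (fun k : ℕ => y ^ k) atTop (nhds 0) :=
          tendsto_pow_atTop_nhds_zero_of_lt_one hy0 hylt
        simpa using h1.mul_const (f y)
    have hβeq : β = fun k => C⁻¹ * b k := funext hβb
    rw [hβeq]
    simpa using hbk.const_mul C⁻¹
  · -- recursion
    intro i hi
    obtain ⟨j, rfl⟩ : ∃ j, i = j + 1 := ⟨i - 1, (Nat.succ_pred_eq_of_pos hi).symm⟩
    set p : ℝ := (j : ℝ) + θ * ν1 with hp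
    have hppos : 0 < p := by positivity
    set q : ℝ := θ * ν0 with hq
    set g : ℝ → ℝ := fun y => Real.exp (-σ * y) * y ^ p * (1 - y) ^ q with hg
    set D : ℝ → ℝ := fun y =>
      ((j : ℝ) + θ * ν1) * (y ^ j * f y) - ((j : ℝ) + θ + σ) * (y ^ (j + 1) * f y)
        + σ * (y ^ (j + 2) * f y) with hD
    have hderiv : ∀ y ∈ Set.Ioo (0:ℝ) 1, HasDerivAt g (D y) y := by
      intro y hy
      have hy0 : 0 < y := hy.1
      have hy1 : 0 < 1 - y := by linarith [hy.2]
      have h1 : HasDerivAt (fun y : ℝ => Real.exp (-σ * y)) (Real.exp (-σ * y) * (-σ)) y := by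
        simpa using ((hasDerivAt_id y).const_mul (-σ)).exp
      have h2 : HasDerivAt (fun y : ℝ => y ^ p) (p * y ^ (p - 1)) y :=
        Real.hasDerivAt_rpow_const (Or.inl (ne_of_gt hy0))
      have h3 : HasDerivAt (fun y : ℝ => (1 - y) ^ q) ((-1) * q * (1 - y) ^ (q - 1)) y := by
        have hsub : HasDerivAt (fun y : ℝ => 1 - y) (-1) y := by
          simpa using (hasDerivAt_id' y).const_sub (1:ℝ)
        exact hsub.rpow_const (Or.inl (ne_of_gt hy1))
      have h := (h1.mul h2).mul h3
      refine h.congr_deriv ?_; symm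
      -- algebraic identity
      have hsplit : ∀ (k : ℕ) (r : ℝ), y ^ ((k : ℝ) + r) = y ^ k * y ^ r := by
        intro k r
        rw [Real.rpow_add hy0, Real.rpow_natCast]
      have hyp : y ^ p = y ^ (j + 1) * y ^ (θ * ν1 - 1) := by
        rw [show p = ((j + 1 : ℕ) : ℝ) + (θ * ν1 - 1) by push_cast [hp]; ring, hsplit]
      have hyp1 : y ^ (p - 1) = y ^ j * y ^ (θ * ν1 - 1) := by
        rw [show p - 1 = ((j : ℕ) : ℝ) + (θ * ν1 - 1) by push_cast [hp]; ring, hsplit]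
      have h1yq : (1 - y) ^ q = (1 - y) * (1 - y) ^ (θ * ν0 - 1) := by
        rw [show q = (θ * ν0 - 1) + 1 by rw [hq]; ring, Real.rpow_add hy1, Real.rpow_one]
        ring
      have h1yq1 : (1 - y) ^ (q - 1) = (1 - y) ^ (θ * ν0 - 1) := by rw [hq]
      have hθν : θ * ν0 = θ - θ * ν1 := by rw [hν0]; ring
      rw [hD, hf]
      simp only [Pi.mul_apply, hyp, hyp1, h1yq, h1yq1]
      have hpow1 : y ^ (j + 1) = y ^ j * y := pow_succ y j
      have hpow2 : y ^ (j + 2) = y ^ j * y * y := by rw [pow_succ, pow_succ]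
      rw [hpow1, hpow2, hp, hq, hθν]
      ring
    have hgcont : ContinuousOn g (Set.Icc (0:ℝ) 1) := by
      apply Continuous.continuousOn
      have c1 : Continuous fun y : ℝ => Real.exp (-σ * y) :=
        Real.continuous_exp.comp (continuous_const.mul continuous_id)
      have c2 : Continuous fun y : ℝ => y ^ p := by
        rw [continuous_iff_continuousAt]
        intro x
        exact Real.continuousAt_rpow_const x p (Or.inr hppos.le)
      have c3 : Continuous fun y : ℝ => (1 - y) ^ q := by
        have : Continuous fun y : ℝ => y ^ q := by
          rw [continuous_iff_continuousAt]
          intro x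
          exact Real.continuousAt_rpow_const x q (Or.inr hb.le)
        exact this.comp (continuous_const.sub continuous_id)
      exact (c1.mul c2).mul c3
    have hDint : IntervalIntegrable D volume 0 1 := by
      exact (((hk j).const_mul _).sub ((hk (j + 1)).const_mul _)).add
        ((hk (j + 2)).const_mul σ)
    have hFTC : ∫ y in (0:ℝ)..1, D y = g 1 - g 0 :=
      intervalIntegral.integral_eq_sub_of_hasDeriv_right_of_le zero_le_one hgcont
        (fun x hx => (hderiv x hx).hasDerivWithinAt) hDint
    have hg1 : g 1 = 0 := by
      rw [hg]
      simp only [sub_self]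
      rw [Real.zero_rpow (ne_of_gt hb)]
      ring
    have hg0 : g 0 = 0 := by
      rw [hg]
      simp only
      rw [Real.zero_rpow (ne_of_gt hppos)]
      ring
    have hrel : ((j : ℝ) + θ * ν1) * b j - ((j : ℝ) + θ + σ) * b (j + 1)
        + σ * b (j + 2) = 0 := by
      have hlin : ∫ y in (0:ℝ)..1, D y
          = ((j : ℝ) + θ * ν1) * b j - ((j : ℝ) + θ + σ) * b (j + 1) + σ * b (j + 2) := by
        rw [hbdef]
        simp only [hD]
        rw [intervalIntegral.integral_add (((hk j).const_mul _).sub ((hk (j + 1)).const_mul _))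
          ((hk (j + 2)).const_mul σ),
          intervalIntegral.integral_sub ((hk j).const_mul _) ((hk (j + 1)).const_mul _),
          intervalIntegral.integral_const_mul, intervalIntegral.integral_const_mul,
          intervalIntegral.integral_const_mul]
      rw [← hlin, hFTC, hg1, hg0, sub_zero]
    have e1 := hβb j
    have e2 := hβb (j + 1)
    have e3 := hβb (j + 2)
    simp only [Nat.add_sub_cancel]
    push_cast
    rw [show j + 1 + 1 = j + 2 from rfl]
    rw [e1, e2, e3]
    linear_combination (-C⁻¹) * hrel
end
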